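/- Let T be a natural number, and let real numbers 0 < μ₂ ≤ μ₁, α > 0 with α·μ₁ > 1, σ_q > 0, and σ_p(k) satisfying 0 ≤ σ_p(k) ≤ (μ₂/μ₁)^k for k = 1,…,T be given. Define ρ := (σ_q² + Σ_{k=1}^T (αμ₂)^{−2k} σ_p(k)²) / (σ_q² + Σ_{k=1}^T (αμ₁)^{−2k} σ_p(k)²). Then ρ ≤ 1 + 1/(σ_q²·(1 − (αμ₁)^{−2})). -/

import Mathlib

open Finset

/-- Corollary 1: with `αμ₁ > 1` and the noise schedule `σ_p(k) ≤ (μ₂/μ₁)^k`,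
the ratio `ρ` is bounded by the constant `1 + 1/(σ_q²(1 - (αμ₁)⁻²))`. -/
theorem stmt_8 (T : ℕ) (μ₁ μ₂ α σq : ℝ) (σp : ℕ → ℝ)
    (hμ₂ : 0 < μ₂) (h21 : μ₂ ≤ μ₁) (hα : 0 < α) (hαμ₁ : 1 < α * μ₁)
    (hσq : 0 < σq)
    (hσp : ∀ k ∈ Finset.Icc 1 T, 0 ≤ σp k ∧ σp k ≤ (μ₂ / μ₁) ^ k) :
    (σq ^ 2 + ∑ k ∈ Finset.Icc 1 T, ((α * μ₂) ^ (2 * k))⁻¹ * σp k ^ 2) /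
      (σq ^ 2 + ∑ k ∈ Finset.Icc 1 T, ((α * μ₁) ^ (2 * k))⁻¹ * σp k ^ 2) ≤
    1 + 1 / (σq ^ 2 * (1 - ((α * μ₁) ^ 2)⁻¹)) := by
  have hμ₁ : 0 < μ₁ := lt_of_lt_of_le hμ₂ h21
  have hαμ₁0 : (0:ℝ) < α * μ₁ := lt_trans one_pos hαμ₁
  set r : ℝ := ((α * μ₁) ^ 2)⁻¹ with hrdef
  have hr0 : 0 < r := by positivity
  have hr1 : r < 1 := by
    rw [hrdef, inv_lt_one_iff₀]
    right
    nlinarith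
  have hrc : 0 < 1 - r := by linarith
  set D : ℝ := σq ^ 2 + ∑ k ∈ Finset.Icc 1 T, ((α * μ₁) ^ (2 * k))⁻¹ * σp k ^ 2 with hDdef
  have hsum_nonneg : 0 ≤ ∑ k ∈ Finset.Icc 1 T, ((α * μ₁) ^ (2 * k))⁻¹ * σp k ^ 2 := by
    apply Finset.sum_nonneg
    intro k hk
    positivity
  have hDge : σq ^ 2 ≤ D := by rw [hDdef]; linarith
  have hD0 : 0 < D := lt_of_lt_of_le (by positivity) hDge
  -- geometric sum bound
  have hrk : ∀ k : ℕ, ((α * μ₁) ^ (2 * k))⁻¹ = r ^ k := by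
    intro k
    rw [hrdef, inv_pow, ← pow_mul]
  have hC : ∑ k ∈ Finset.Icc 1 T, ((α * μ₁) ^ (2 * k))⁻¹ ≤ (1 - r)⁻¹ := by
    calc ∑ k ∈ Finset.Icc 1 T, ((α * μ₁) ^ (2 * k))⁻¹
        = ∑ k ∈ Finset.Icc 1 T, r ^ k := by
          exact Finset.sum_congr rfl fun k _ => hrk k
      _ ≤ ∑ k ∈ Finset.range (T + 1), r ^ k := by
          apply Finset.sum_le_sum_of_subset_of_nonneg
          · intro k hk
            simp only [Finset.mem_Icc] at hk
            simp [Finset.mem_range]; omega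
          · intro k _ _; positivity
      _ ≤ (1 - r)⁻¹ := by
          have h := Summable.sum_le_tsum (Finset.range (T + 1)) (fun i _ => by positivity)
            (summable_geometric_of_lt_one hr0.le hr1)
          rwa [tsum_geometric_of_lt_one hr0.le hr1] at h
  -- termwise bound for numerator
  have hterm : ∀ k ∈ Finset.Icc 1 T,
      ((α * μ₂) ^ (2 * k))⁻¹ * σp k ^ 2 ≤
      ((α * μ₁) ^ (2 * k))⁻¹ * σp k ^ 2 + ((α * μ₁) ^ (2 * k))⁻¹ := by
    intro k hk
    obtain ⟨h0, h1⟩ := hσp k hk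
    have hsq : σp k ^ 2 ≤ ((μ₂ / μ₁) ^ k) ^ 2 := by
      apply pow_le_pow_left₀ h0 h1
    have key : ((α * μ₂) ^ (2 * k))⁻¹ * ((μ₂ / μ₁) ^ k) ^ 2 = ((α * μ₁) ^ (2 * k))⁻¹ := by
      rw [← pow_mul, mul_comm k 2]
      field_simp
      rw [div_pow, div_mul_eq_mul_div, div_eq_iff (by positivity)]
      ring
    have h2 : ((α * μ₂) ^ (2 * k))⁻¹ * σp k ^ 2 ≤ ((α * μ₁) ^ (2 * k))⁻¹ := by
      rw [← key]
      apply mul_le_mul_of_nonneg_left hsq (by positivity)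
    have h3 : 0 ≤ ((α * μ₁) ^ (2 * k))⁻¹ * σp k ^ 2 := by positivity
    linarith
  have hN : σq ^ 2 + ∑ k ∈ Finset.Icc 1 T, ((α * μ₂) ^ (2 * k))⁻¹ * σp k ^ 2 ≤
      D + ∑ k ∈ Finset.Icc 1 T, ((α * μ₁) ^ (2 * k))⁻¹ := by
    rw [hDdef]
    have := Finset.sum_le_sum hterm
    rw [Finset.sum_add_distrib] at this
    linarith
  calc (σq ^ 2 + ∑ k ∈ Finset.Icc 1 T, ((α * μ₂) ^ (2 * k))⁻¹ * σp k ^ 2) / D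
      ≤ (D + ∑ k ∈ Finset.Icc 1 T, ((α * μ₁) ^ (2 * k))⁻¹) / D := by
        exact (div_le_div_iff_of_pos_right hD0).mpr hN
    _ = 1 + (∑ k ∈ Finset.Icc 1 T, ((α * μ₁) ^ (2 * k))⁻¹) / D := by
        field_simp
    _ ≤ 1 + (1 - r)⁻¹ / σq ^ 2 := by
        have := div_le_div₀ (by positivity : (0:ℝ) ≤ (1 - r)⁻¹) hC (by positivity : (0:ℝ) < σq ^ 2) hDge
        linarith
    _ = 1 + 1 / (σq ^ 2 * (1 - r)) := by
        rw [one_div, mul_inv, div_eq_mul_inv]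
        ring
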